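/- Let κ : [0,∞) → [0,∞) be nondecreasing and concave with κ(0) = 0, and let g : ℝ^k × ℝ^{k×d} → ℝ^k satisfy: (i) ⟨y₁ − y₂, g(y₁, z) − g(y₂, z)⟩ ≤ κ(|y₁ − y₂|²) for all y₁, y₂, z; (ii) |g(y, z₁) − g(y, z₂)| ≤ μ|z₁ − z₂| for all y, z₁, z₂, where μ ≥ 0. Let α > 0, φ ≥ 0 with sup_{|y| ≤ α+1} |g(y, 0) − g(0, 0)| ≤ φ, fix y⁰ ∈ ℝ^k with |y⁰| ≤ α + 1, z⁰ ∈ ℝ^{k×d}, and integers 1 ≤ n ≤ m. Define ĝ(y, z) = (g(y + y⁰, q_m(z + z⁰)) − g(0,0))·(m / max(φ, m)) − (g(y⁰, q_n(z⁰)) − g(0,0))·(n / max(φ, n)). Then for all y ∈ ℝ^k and z ∈ ℝ^{k×d}, ⟨y, ĝ(y, z)⟩ ≤ κ(|y|²) + μ|y|(|z| + 2|z⁰|·1_{|z⁰| > n}) + 2·1_{φ > n}·|y|·(φ + μ|z⁰|). -/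
import Mathlib


open scoped RealInnerProductSpace

/-- The radial truncation at level `r`: `q_r(x) = (r / max(‖x‖, r)) • x`. -/
noncomputable def qtrunc {E : Type*} [NormedAddCommGroup E] [NormedSpace ℝ E]
    (r : ℝ) (x : E) : E :=
  (r / max ‖x‖ r) • x

lemma qtrunc_of_le {E : Type*} [NormedAddCommGroup E] [NormedSpace ℝ E] {r : ℝ}
    (hr : 0 < r) {x : E} (hx : ‖x‖ ≤ r) : qtrunc r x = x := by
  simp [qtrunc, max_eq_right hx, div_self hr.ne']

lemma norm_qtrunc_le_norm {E : Type*} [NormedAddCommGroup E] [NormedSpace ℝ E] {r : ℝ}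
    (hr : 0 < r) (x : E) : ‖qtrunc r x‖ ≤ ‖x‖ := by
  have h1 : (0:ℝ) < max ‖x‖ r := lt_max_of_lt_right hr
  rw [qtrunc, norm_smul, Real.norm_eq_abs, abs_of_nonneg (div_nonneg hr.le h1.le)]
  have : r / max ‖x‖ r ≤ 1 := div_le_one_of_le₀ (le_max_right _ _) h1.le
  nlinarith [norm_nonneg x]

lemma norm_qtrunc_le {E : Type*} [NormedAddCommGroup E] [NormedSpace ℝ E] {r : ℝ}
    (hr : 0 < r) (x : E) : ‖qtrunc r x‖ ≤ r := by
  have h1 : (0:ℝ) < max ‖x‖ r := lt_max_of_lt_right hr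
  rw [qtrunc, norm_smul, Real.norm_eq_abs, abs_of_nonneg (div_nonneg hr.le h1.le)]
  rw [div_mul_eq_mul_div, div_le_iff₀ h1]
  exact mul_le_mul_of_nonneg_left (le_max_left _ _) hr.le

lemma norm_qtrunc_sub_le {E : Type*} [NormedAddCommGroup E] [InnerProductSpace ℝ E] {r : ℝ}
    (hr : 0 < r) (x w : E) (hw : ‖w‖ ≤ r) : ‖qtrunc r x - w‖ ≤ ‖x - w‖ := by
  by_cases h : ‖x‖ ≤ r
  · rw [qtrunc_of_le hr h]
  · push_neg at h
    have hx : (0:ℝ) < ‖x‖ := hr.trans h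
    have hq : qtrunc r x = (r / ‖x‖) • x := by rw [qtrunc, max_eq_left h.le]
    rw [hq]
    set t : ℝ := r / ‖x‖ with ht
    have ht0 : 0 ≤ t := div_nonneg hr.le hx.le
    have ht1 : t ≤ 1 := by rw [ht, div_le_one hx]; exact h.le
    have hta : t * ‖x‖ = r := div_mul_cancel₀ _ hx.ne'
    have hiw : ⟪x, w⟫ ≤ ‖x‖ * r :=
      (real_inner_le_norm x w).trans (by nlinarith)
    have key : ‖t • x - w‖ ^ 2 ≤ ‖x - w‖ ^ 2 := by
      rw [norm_sub_sq_real, norm_sub_sq_real, norm_smul, real_inner_smul_left,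
        Real.norm_eq_abs, abs_of_nonneg ht0]
      nlinarith [mul_le_mul_of_nonneg_left hiw (sub_nonneg.2 ht1)]
    nlinarith [norm_nonneg (t • x - w), norm_nonneg (x - w)]

set_option maxHeartbeats 1000000 in
/-- One-sided estimate for the difference of two truncated generators:
`ghat(y,z) = (g(y + y⁰, q_m(z + z⁰)) − g(0,0))·(m / max(φ, m))
          − (g(y⁰, q_n(z⁰)) − g(0,0))·(n / max(φ, n))` satisfies
`⟨y, ghat(y,z)⟩ ≤ κ(|y|²) + μ|y|(|z| + 2|z⁰|·1_{|z⁰| > n}) + 2·1_{φ > n}·|y|·(φ + μ|z⁰|)`. -/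
theorem diff_truncated_generators_one_sided_bound {k d : ℕ} (κ : ℝ → ℝ)
    (hmono : MonotoneOn κ (Set.Ici 0))
    (hconc : ConcaveOn ℝ (Set.Ici 0) κ)
    (hnonneg : ∀ u ∈ Set.Ici (0 : ℝ), 0 ≤ κ u)
    (h0 : κ 0 = 0)
    (g : EuclideanSpace ℝ (Fin k) → EuclideanSpace ℝ (Fin k × Fin d) →
      EuclideanSpace ℝ (Fin k))
    (μ : ℝ) (hμ : 0 ≤ μ)
    (hg1 : ∀ (y₁ y₂ : EuclideanSpace ℝ (Fin k)) (z : EuclideanSpace ℝ (Fin k × Fin d)),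
      ⟪y₁ - y₂, g y₁ z - g y₂ z⟫ ≤ κ (‖y₁ - y₂‖ ^ 2))
    (hg2 : ∀ (y : EuclideanSpace ℝ (Fin k)) (z₁ z₂ : EuclideanSpace ℝ (Fin k × Fin d)),
      ‖g y z₁ - g y z₂‖ ≤ μ * ‖z₁ - z₂‖)
    (α : ℝ) (hα : 0 < α) (φ : ℝ) (hφ0 : 0 ≤ φ)
    (hφ : ∀ y : EuclideanSpace ℝ (Fin k), ‖y‖ ≤ α + 1 → ‖g y 0 - g 0 0‖ ≤ φ)
    (y₀ : EuclideanSpace ℝ (Fin k)) (hy₀ : ‖y₀‖ ≤ α + 1)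
    (z₀ : EuclideanSpace ℝ (Fin k × Fin d))
    (n m : ℕ) (hn : 1 ≤ n) (hnm : n ≤ m)
    (ghat : EuclideanSpace ℝ (Fin k) → EuclideanSpace ℝ (Fin k × Fin d) →
      EuclideanSpace ℝ (Fin k))
    (hdef : ∀ y z, ghat y z =
      ((m : ℝ) / max φ (m : ℝ)) • (g (y + y₀) (qtrunc (m : ℝ) (z + z₀)) - g 0 0)
        - ((n : ℝ) / max φ (n : ℝ)) • (g y₀ (qtrunc (n : ℝ) z₀) - g 0 0)) :
    ∀ (y : EuclideanSpace ℝ (Fin k)) (z : EuclideanSpace ℝ (Fin k × Fin d)),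
      ⟪y, ghat y z⟫ ≤
        κ (‖y‖ ^ 2)
          + μ * ‖y‖ * (‖z‖ + 2 * ‖z₀‖ * (if (n : ℝ) < ‖z₀‖ then 1 else 0))
          + 2 * (if (n : ℝ) < φ then 1 else 0) * ‖y‖ * (φ + μ * ‖z₀‖) := by
  intro y z
  have hn1 : (1:ℝ) ≤ (n:ℝ) := by exact_mod_cast hn
  have hm1 : (1:ℝ) ≤ (m:ℝ) := by exact_mod_cast hn.trans hnm
  have hnm' : (n:ℝ) ≤ (m:ℝ) := by exact_mod_cast hnm
  have hn0 : (0:ℝ) < (n:ℝ) := by linarith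
  have hm0 : (0:ℝ) < (m:ℝ) := by linarith
  set Qm := qtrunc (m:ℝ) (z + z₀) with hQm
  set Qn := qtrunc (n:ℝ) z₀ with hQn
  set cm : ℝ := (m:ℝ) / max φ (m:ℝ) with hcm
  set cn : ℝ := (n:ℝ) / max φ (n:ℝ) with hcn
  have hMm : (0:ℝ) < max φ (m:ℝ) := lt_max_of_lt_right hm0
  have hMn : (0:ℝ) < max φ (n:ℝ) := lt_max_of_lt_right hn0
  have hcm0 : 0 ≤ cm := div_nonneg hm0.le hMm.le
  have hcn0 : 0 ≤ cn := div_nonneg hn0.le hMn.le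
  have hcm1 : cm ≤ 1 := div_le_one_of_le₀ (le_max_right _ _) hMm.le
  have hcn1 : cn ≤ 1 := div_le_one_of_le₀ (le_max_right _ _) hMn.le
  set A : ℝ := ⟪y, g (y + y₀) Qm - g y₀ Qm⟫ with hA'
  set B : ℝ := ⟪y, g y₀ Qm - g y₀ Qn⟫ with hB'
  set C : ℝ := ⟪y, g y₀ Qn - g 0 0⟫ with hC'
  have hsplit : ⟪y, ghat y z⟫ = cm * A + cm * B + (cm - cn) * C := by
    rw [hdef, hA', hB', hC']
    simp only [inner_sub_right, inner_smul_right]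
    ring
  have hκ0 : 0 ≤ κ (‖y‖ ^ 2) := hnonneg _ (Set.mem_Ici.mpr (by positivity))
  have hA : A ≤ κ (‖y‖ ^ 2) := by
    have := hg1 (y + y₀) y₀ Qm
    simpa using this
  have hB : B ≤ ‖y‖ * (μ * ‖Qm - Qn‖) :=
    (real_inner_le_norm _ _).trans
      (mul_le_mul_of_nonneg_left (hg2 y₀ Qm Qn) (norm_nonneg y))
  have hQnz : ‖Qn‖ ≤ ‖z₀‖ := norm_qtrunc_le_norm hn0 z₀
  have hC : |C| ≤ ‖y‖ * (φ + μ * ‖z₀‖) := by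
    have h1 : ‖g y₀ Qn - g 0 0‖ ≤ μ * ‖z₀‖ + φ := by
      calc ‖g y₀ Qn - g 0 0‖ ≤ ‖g y₀ Qn - g y₀ 0‖ + ‖g y₀ 0 - g 0 0‖ :=
            norm_sub_le_norm_sub_add_norm_sub _ _ _
        _ ≤ μ * ‖Qn - 0‖ + φ := add_le_add (hg2 y₀ Qn 0) (hφ y₀ hy₀)
        _ ≤ μ * ‖z₀‖ + φ := by rw [sub_zero]; nlinarith
    calc |C| ≤ ‖y‖ * ‖g y₀ Qn - g 0 0‖ := abs_real_inner_le_norm _ _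
      _ ≤ ‖y‖ * (φ + μ * ‖z₀‖) := by
          nlinarith [norm_nonneg y]
  have hQ : ‖Qm - Qn‖ ≤ ‖z‖ + 2 * ‖z₀‖ * (if (n : ℝ) < ‖z₀‖ then 1 else 0) := by
    by_cases hz : (n:ℝ) < ‖z₀‖
    · rw [if_pos hz]
      have h1 : ‖Qm‖ ≤ ‖z‖ + ‖z₀‖ :=
        (norm_qtrunc_le_norm hm0 _).trans (norm_add_le _ _)
      calc ‖Qm - Qn‖ ≤ ‖Qm‖ + ‖Qn‖ := norm_sub_le _ _
        _ ≤ ‖z‖ + 2 * ‖z₀‖ * 1 := by nlinarith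
    · rw [if_neg hz]
      push_neg at hz
      have hQnz0 : Qn = z₀ := qtrunc_of_le hn0 hz
      have : ‖Qm - z₀‖ ≤ ‖z + z₀ - z₀‖ :=
        norm_qtrunc_sub_le hm0 (z + z₀) z₀ (hz.trans hnm')
      rw [hQnz0]
      simpa using this
  have hterm1 : cm * A ≤ κ (‖y‖ ^ 2) := by
    calc cm * A ≤ cm * κ (‖y‖ ^ 2) := mul_le_mul_of_nonneg_left hA hcm0
      _ ≤ 1 * κ (‖y‖ ^ 2) := mul_le_mul_of_nonneg_right hcm1 hκ0
      _ = κ (‖y‖ ^ 2) := one_mul _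
  have hterm2 : cm * B ≤ μ * ‖y‖ * (‖z‖ + 2 * ‖z₀‖ * (if (n : ℝ) < ‖z₀‖ then 1 else 0)) := by
    have hB2 : B ≤ μ * ‖y‖ * (‖z‖ + 2 * ‖z₀‖ * (if (n : ℝ) < ‖z₀‖ then 1 else 0)) := by
      calc B ≤ ‖y‖ * (μ * ‖Qm - Qn‖) := hB
        _ ≤ ‖y‖ * (μ * (‖z‖ + 2 * ‖z₀‖ * (if (n : ℝ) < ‖z₀‖ then 1 else 0))) := by
            gcongr
        _ = μ * ‖y‖ * (‖z‖ + 2 * ‖z₀‖ * (if (n : ℝ) < ‖z₀‖ then 1 else 0)) := by ring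
    have hrhs : 0 ≤ μ * ‖y‖ * (‖z‖ + 2 * ‖z₀‖ * (if (n : ℝ) < ‖z₀‖ then 1 else 0)) := by
      have : (0:ℝ) ≤ (if (n : ℝ) < ‖z₀‖ then (1:ℝ) else 0) := by positivity
      have h2 : 0 ≤ ‖z‖ + 2 * ‖z₀‖ * (if (n : ℝ) < ‖z₀‖ then (1:ℝ) else 0) := by
        have := norm_nonneg z; have := norm_nonneg z₀; nlinarith
      positivity
    nlinarith
  have hterm3 : (cm - cn) * C ≤ 2 * (if (n : ℝ) < φ then 1 else 0) * ‖y‖ * (φ + μ * ‖z₀‖) := by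
    by_cases hφn : (n:ℝ) < φ
    · rw [if_pos hφn]
      have habs : |cm - cn| ≤ 2 := abs_le.2 ⟨by linarith, by linarith⟩
      calc (cm - cn) * C ≤ |(cm - cn) * C| := le_abs_self _
        _ = |cm - cn| * |C| := abs_mul _ _
        _ ≤ 2 * (‖y‖ * (φ + μ * ‖z₀‖)) :=
            mul_le_mul habs hC (abs_nonneg _) (by norm_num)
        _ = 2 * 1 * ‖y‖ * (φ + μ * ‖z₀‖) := by ring
    · rw [if_neg hφn]
      push_neg at hφn
      have hcmeq : cm = 1 := by
        rw [hcm, max_eq_right (hφn.trans hnm'), div_self hm0.ne']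
      have hcneq : cn = 1 := by
        rw [hcn, max_eq_right hφn, div_self hn0.ne']
      rw [hcmeq, hcneq]
      ring_nf
      positivity
  rw [hsplit]
  linarith
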